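/- The polynomial 64λ¹⁶ + 2784λ¹² - 274803λ⁸ + 15476896λ⁴ - 45349632 has exactly one real positive root λ₂, and λ₂ ∈ (1.32, 1.33). -/

import Mathlib

private noncomputable def f13 : ℝ → ℝ :=
  fun x => 64*x^16 + 2784*x^12 - 274803*x^8 + 15476896*x^4 - 45349632

private lemma f13_deriv (x : ℝ) :
    HasDerivAt f13 (1024*x^15 + 33408*x^11 - 2198424*x^7 + 61907584*x^3) x := by
  have h := (((((hasDerivAt_pow 16 x).const_mul (64:ℝ)).add
      ((hasDerivAt_pow 12 x).const_mul (2784:ℝ))).sub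
      ((hasDerivAt_pow 8 x).const_mul (274803:ℝ))).add
      ((hasDerivAt_pow 4 x).const_mul (15476896:ℝ))).sub_const (45349632:ℝ)
  refine h.congr_deriv ?_
  push_cast
  ring

private lemma f13_cubic_pos (u : ℝ) (hu : 0 ≤ u) :
    0 < 1024*u^3 + 33408*u^2 - 2198424*u + 61907584 := by
  nlinarith [mul_nonneg hu (sq_nonneg (u - 27)), sq_nonneg (u - 17), sq_nonneg u]

private lemma f13_strictMono : StrictMonoOn f13 (Set.Ici 0) := by
  apply strictMonoOn_of_deriv_pos (convex_Ici 0)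
  · exact fun x _ => ((f13_deriv x).differentiableAt).continuousAt.continuousWithinAt
  · intro x hx
    rw [interior_Ici] at hx
    have hx' : (0:ℝ) < x := hx
    rw [(f13_deriv x).deriv]
    have h1 : (0:ℝ) < x^3 := by positivity
    have h2 := f13_cubic_pos (x^4) (by positivity)
    nlinarith [mul_pos h1 h2]

private lemma f13_neg : f13 1.32 < 0 := by
  norm_num [f13]

private lemma f13_pos : 0 < f13 1.33 := by
  norm_num [f13]

private lemma f13_root_exists : ∃ x ∈ Set.Ioo (1.32:ℝ) 1.33, f13 x = 0 := by
  have hc : ContinuousOn f13 (Set.Icc (1.32:ℝ) 1.33) :=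
    fun x _ => ((f13_deriv x).differentiableAt).continuousAt.continuousWithinAt
  have := intermediate_value_Ioo (by norm_num : (1.32:ℝ) ≤ 1.33) hc
  have h0 : (0:ℝ) ∈ Set.Ioo (f13 1.32) (f13 1.33) := ⟨f13_neg, f13_pos⟩
  obtain ⟨x, hx, hfx⟩ := this h0
  exact ⟨x, hx, hfx⟩

private lemma f13_bounds {x : ℝ} (hx : 0 < x) (hfx : f13 x = 0) :
    (1.32:ℝ) < x ∧ x < 1.33 := by
  constructor
  · by_contra h
    push_neg at h
    have := f13_strictMono.monotoneOn (Set.mem_Ici.mpr hx.le)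
      (by norm_num : (1.32:ℝ) ∈ Set.Ici (0:ℝ)) h
    have := f13_neg
    linarith
  · by_contra h
    push_neg at h
    have := f13_strictMono.monotoneOn (by norm_num : (1.33:ℝ) ∈ Set.Ici (0:ℝ))
      (Set.mem_Ici.mpr hx.le) h
    have := f13_pos
    linarith

/-- The polynomial `64λ¹⁶ + 2784λ¹² - 274803λ⁸ + 15476896λ⁴ - 45349632` has exactly one
positive real root `λ₂`, and `λ₂ ∈ (1.32, 1.33)`. -/
theorem stmt_13 :
    (∃! x : ℝ, 0 < x ∧
      64*x^16 + 2784*x^12 - 274803*x^8 + 15476896*x^4 - 45349632 = 0) ∧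
    (∀ x : ℝ, 0 < x →
      64*x^16 + 2784*x^12 - 274803*x^8 + 15476896*x^4 - 45349632 = 0 →
      (1.32 : ℝ) < x ∧ x < (1.33 : ℝ)) := by
  obtain ⟨r, ⟨hr1, hr2⟩, hr0⟩ := f13_root_exists
  have hrpos : 0 < r := by linarith
  constructor
  · refine ⟨r, ⟨hrpos, hr0⟩, ?_⟩
    rintro y ⟨hy, hfy⟩
    exact f13_strictMono.injOn (Set.mem_Ici.mpr hy.le) (Set.mem_Ici.mpr hrpos.le)
      (by have h1 : f13 y = 0 := hfy; rw [h1, hr0])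
  · intro x hx hfx
    exact f13_bounds hx hfx
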